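/- If a_k denotes the k-th Maclaurin coefficient of y (where y(v) = v/f(v), y(0) = √2/2, f the inverse of x ↦ sgn(x)·√(x - ln(1+x))), then a_0 = √2/2, a_1 = -1/3, a_2 = √2/12, a_3 = -4/135, and a_4 = √2/432. -/

import Mathlib

open Real Set Filter Topology

noncomputable def qq : ℝ → ℝ := fun x => if x = 0 then 1/2 else (x - Real.log (1+x))/x^2

noncomputable def qc : ℕ → ℝ := fun n => (-1)^n/(n+2)

lemma qq_zero : qq 0 = 1/2 := by simp [qq]

lemma hasSum_qq {x : ℝ} (hx : |x| < 1) : HasSum (fun n : ℕ => qc n * x^n) (qq x) := by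
  rcases eq_or_ne x 0 with rfl|hx0
  · convert hasSum_single (f := fun n : ℕ => qc n * (0:ℝ)^n) 0 ?_ using 1
    · simp [qq, qc]
    · intro b hb; simp [zero_pow hb]
  · have h1 : HasSum (fun n : ℕ => (-x) ^ (n + 1) / (n + 1)) (-Real.log (1 - -x)) :=
      hasSum_pow_div_log_of_abs_lt_one (by rwa [abs_neg])
    have h2 := (hasSum_nat_add_iff' (f := fun n : ℕ => (-x) ^ (n + 1) / (n + 1)) 1).mpr h1
    have h3 := h2.mul_left ((x^2)⁻¹)
    convert h3 using 1
    · rfl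
    · funext n
      have e : (-x)^(n+1+1) = (-1)^n * (x^n * x^2) := by
        rw [show n+1+1 = n+2 from rfl, neg_pow, pow_add, pow_add]; ring
      rw [e]
      simp only [qc]
      push_cast
      field_simp
      ring
    · have hx1 : (1:ℝ) + x > 0 := by cases' abs_lt.mp hx with h h; linarith
      simp only [qq, if_neg hx0, sub_neg_eq_add]
      simp only [Finset.range_one, Finset.sum_singleton]
      field_simp
      ring

lemma qq_series : HasFPowerSeriesOnBall qq (FormalMultilinearSeries.ofScalars ℝ qc) 0 1 := by
  constructor
  · refine le_trans ?_ ((FormalMultilinearSeries.ofScalars ℝ qc).le_radius_of_bound 1 (r := 1) ?_)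
    · norm_num
    · intro n
      rw [FormalMultilinearSeries.ofScalars_norm]
      simp only [qc, NNReal.coe_one, one_pow, mul_one, Real.norm_eq_abs]
      rw [abs_div, abs_pow, abs_neg, abs_one, one_pow]
      rw [abs_of_pos (by positivity)]
      rw [div_le_one (by positivity)]
      linarith [Nat.cast_nonneg (α := ℝ) n]
  · norm_num
  · intro y hy
    have hy' : |y| < 1 := by
      have := hy
      simp only [EMetric.mem_ball, edist_zero_right] at this
      have : ‖y‖₊ < 1 := by simpa [enorm_eq_nnnorm] using this
      simpa [← NNReal.coe_lt_coe, Real.norm_eq_abs] using this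
    have := hasSum_qq hy'
    simp only [FormalMultilinearSeries.ofScalars_apply_eq, smul_eq_mul, zero_add]
    exact this

lemma qq_iteratedDeriv (n : ℕ) : iteratedDeriv n qq 0 = (Nat.factorial n : ℝ) * qc n := by
  have h := qq_series.factorial_smul (1:ℝ) n
  rw [iteratedDeriv_eq_iteratedFDeriv, ← h, FormalMultilinearSeries.ofScalars_apply_eq]
  simp

lemma qq_contDiffAt : ContDiffAt ℝ 4 qq 0 :=
  qq_series.hasFPowerSeriesAt.analyticAt.contDiffAt

lemma contDiffAt_deriv' {f : ℝ → ℝ} {x : ℝ} {n : ℕ} (hf : ContDiffAt ℝ (n+1) f x) :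
    ContDiffAt ℝ n (deriv f) x := by
  have h1 : ContDiffAt ℝ n (fderiv ℝ f) x := hf.fderiv_right (by exact_mod_cast le_refl (n+1))
  have h2 : ContDiffAt ℝ n (fun y => fderiv ℝ f y 1) x :=
    (ContinuousLinearMap.apply ℝ ℝ (1:ℝ)).contDiff.contDiffAt.comp x h1
  refine h2.congr_of_eventuallyEq ?_
  filter_upwards with y
  exact fderiv_apply_one_eq_deriv.symm

lemma cd_diff0 {f : ℝ → ℝ} {y : ℝ} (h : ContDiffAt ℝ 4 f y) : DifferentiableAt ℝ f y :=
  h.differentiableAt (by norm_num)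

lemma cd_to3 {f : ℝ → ℝ} {y : ℝ} (h : ContDiffAt ℝ 4 f y) : ContDiffAt ℝ 3 (deriv f) y := by
  have : ContDiffAt ℝ ((3:ℕ)+1) f y := by exact_mod_cast h
  exact_mod_cast contDiffAt_deriv' this

lemma cd_to2 {f : ℝ → ℝ} {y : ℝ} (h : ContDiffAt ℝ 3 f y) : ContDiffAt ℝ 2 (deriv f) y := by
  have : ContDiffAt ℝ ((2:ℕ)+1) f y := by exact_mod_cast h
  exact_mod_cast contDiffAt_deriv' this

lemma cd_to1 {f : ℝ → ℝ} {y : ℝ} (h : ContDiffAt ℝ 2 f y) : ContDiffAt ℝ 1 (deriv f) y := by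
  have : ContDiffAt ℝ ((1:ℕ)+1) f y := by exact_mod_cast h
  exact_mod_cast contDiffAt_deriv' this

lemma cd_diff1 {f : ℝ → ℝ} {y : ℝ} (h : ContDiffAt ℝ 4 f y) : DifferentiableAt ℝ (deriv f) y :=
  (cd_to3 h).differentiableAt (by norm_num)

lemma cd_diff2 {f : ℝ → ℝ} {y : ℝ} (h : ContDiffAt ℝ 4 f y) :
    DifferentiableAt ℝ (deriv (deriv f)) y :=
  (cd_to2 (cd_to3 h)).differentiableAt (by norm_num)

lemma cd_diff3 {f : ℝ → ℝ} {y : ℝ} (h : ContDiffAt ℝ 4 f y) :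
    DifferentiableAt ℝ (deriv (deriv (deriv f))) y :=
  (cd_to1 (cd_to2 (cd_to3 h))).differentiableAt (by norm_num)

lemma ev_cd {f : ℝ → ℝ} (hf : ContDiffAt ℝ 4 f 0) : ∀ᶠ y in 𝓝 (0:ℝ), ContDiffAt ℝ 4 f y :=
  hf.eventually (by simp)

noncomputable def hh : ℝ → ℝ := fun x => Real.sqrt (qq x)

lemma hh_contDiffAt : ContDiffAt ℝ 4 hh 0 :=
  (Real.contDiffAt_sqrt (by rw [qq_zero]; norm_num)).comp 0 qq_contDiffAt

lemma qq_pos_ev : ∀ᶠ y in 𝓝 (0:ℝ), 0 < qq y := by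
  have h : ∀ᶠ z in 𝓝 (qq 0), 0 < z := by rw [qq_zero]; exact eventually_gt_nhds (by norm_num)
  exact qq_contDiffAt.continuousAt.eventually h

lemma hh_sq_ev : (fun y => hh y * hh y) =ᶠ[𝓝 (0:ℝ)] qq := by
  filter_upwards [qq_pos_ev] with y hy
  exact Real.mul_self_sqrt hy.le

lemma hh0 : hh 0 = Real.sqrt 2 / 2 := by
  have h : (Real.sqrt 2/2)^2 = 1/2 := by
    rw [div_pow, Real.sq_sqrt (by norm_num : (0:ℝ) ≤ 2)]; norm_num
  rw [hh]; simp only [qq_zero]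
  rw [← h, Real.sqrt_sq (by positivity)]

lemma qd1 : deriv qq 0 = -(1/3) := by
  have h := qq_iteratedDeriv 1
  rw [iteratedDeriv_one] at h
  rw [h]; norm_num [qc]

lemma qd2 : deriv (deriv qq) 0 = 1/2 := by
  have h := qq_iteratedDeriv 2
  simp only [iteratedDeriv_succ, iteratedDeriv_zero] at h
  rw [h]; norm_num [qc]

lemma qd3 : deriv (deriv (deriv qq)) 0 = -(6/5) := by
  have h := qq_iteratedDeriv 3
  simp only [iteratedDeriv_succ, iteratedDeriv_zero] at h
  rw [h]; norm_num [qc, Nat.factorial]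

lemma qd4 : deriv (deriv (deriv (deriv qq))) 0 = 4 := by
  have h := qq_iteratedDeriv 4
  simp only [iteratedDeriv_succ, iteratedDeriv_zero] at h
  rw [h]; norm_num [qc, Nat.factorial]

lemma E1 : deriv qq =ᶠ[𝓝 (0:ℝ)] fun y => 2*(hh y * deriv hh y) := by
  filter_upwards [ev_cd hh_contDiffAt, hh_sq_ev.eventuallyEq_nhds] with y hy hq
  rw [← hq.deriv_eq, deriv_fun_mul (cd_diff0 hy) (cd_diff0 hy)]; ring

lemma E2 : deriv (deriv qq) =ᶠ[𝓝 (0:ℝ)]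
    fun y => 2*(deriv hh y * deriv hh y + hh y * deriv (deriv hh) y) := by
  filter_upwards [ev_cd hh_contDiffAt, E1.eventuallyEq_nhds] with y hy h1
  rw [h1.deriv_eq]
  have := (((cd_diff0 hy).hasDerivAt.fun_mul (cd_diff1 hy).hasDerivAt).const_mul (2:ℝ)).deriv
  rw [this]; try ring

lemma E3 : deriv (deriv (deriv qq)) =ᶠ[𝓝 (0:ℝ)]
    fun y => 2*(3*(deriv hh y * deriv (deriv hh) y) + hh y * deriv (deriv (deriv hh)) y) := by
  filter_upwards [ev_cd hh_contDiffAt, E2.eventuallyEq_nhds] with y hy h2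
  rw [h2.deriv_eq]
  have A := (cd_diff1 hy).hasDerivAt.fun_mul (cd_diff1 hy).hasDerivAt
  have B := (cd_diff0 hy).hasDerivAt.fun_mul (cd_diff2 hy).hasDerivAt
  have := ((A.fun_add B).const_mul (2:ℝ)).deriv
  rw [this]; try ring

lemma E4 : deriv (deriv (deriv (deriv qq))) 0 =
    2*(3*(deriv (deriv hh) 0 * deriv (deriv hh) 0) + 4*(deriv hh 0 * deriv (deriv (deriv hh)) 0)
      + hh 0 * deriv (deriv (deriv (deriv hh))) 0) := by
  have h3 := E3.eventuallyEq_nhds.self_of_nhds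
  have hy := (ev_cd hh_contDiffAt).self_of_nhds
  rw [h3.deriv_eq]
  have A := ((cd_diff1 hy).hasDerivAt.fun_mul (cd_diff2 hy).hasDerivAt).const_mul (3:ℝ)
  have B := (cd_diff0 hy).hasDerivAt.fun_mul (cd_diff3 hy).hasDerivAt
  have := ((A.fun_add B).const_mul (2:ℝ)).deriv
  rw [this]; try ring

lemma sqrt2_cancel {X v : ℝ} (h : Real.sqrt 2 * (X - v) = 0) : X = v := by
  rcases mul_eq_zero.mp h with h|h
  · exact absurd h (Real.sqrt_ne_zero'.mpr two_pos)  -- maybe wrong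
  · linarith

lemma hs2 : Real.sqrt 2 ^ 2 = 2 := Real.sq_sqrt (by norm_num)

lemma hh_d1 : deriv hh 0 = -(Real.sqrt 2)/6 := by
  have e := E1.self_of_nhds
  simp only [] at e
  rw [qd1, hh0] at e
  apply sqrt2_cancel
  linear_combination -e + (1/6)*hs2

lemma hh_d2 : deriv (deriv hh) 0 = 7*Real.sqrt 2/36 := by
  have e := E2.self_of_nhds
  simp only [] at e
  rw [qd2, hh0, hh_d1] at e
  apply sqrt2_cancel
  linear_combination -e - (1/4)*hs2

lemma hh_d3 : deriv (deriv (deriv hh)) 0 = -(73*Real.sqrt 2)/180 := by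
  have e := E3.self_of_nhds
  simp only [] at e
  rw [qd3, hh0, hh_d1, hh_d2] at e
  apply sqrt2_cancel
  linear_combination -e + (3/5)*hs2

lemma hh_d4 : deriv (deriv (deriv (deriv hh))) 0 = 1331*Real.sqrt 2/1080 := by
  have e := E4
  rw [qd4, hh0, hh_d1, hh_d2, hh_d3] at e
  apply sqrt2_cancel
  linear_combination -e - 2*hs2

noncomputable def mm : ℝ → ℝ := fun x => x - Real.log (1+x)

lemma mm_hasDerivAt {x : ℝ} (hx : -1 < x) : HasDerivAt mm (1 - 1/(1+x)) x := by
  have h1 : (1:ℝ) + x ≠ 0 := by linarith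
  have h2 : HasDerivAt (fun y : ℝ => 1 + y) 1 x := (hasDerivAt_id x).const_add 1
  have h3 := h2.log h1
  exact (hasDerivAt_id x).fun_sub h3

lemma mm_cont : ContinuousOn mm (Ioi (-1:ℝ)) := by
  apply ContinuousOn.sub continuous_id.continuousOn
  exact ContinuousOn.log ((continuous_const.add continuous_id).continuousOn)
    (fun x hx => ne_of_gt (show (0:ℝ) < 1 + x by have := mem_Ioi.mp hx; linarith))

lemma mm_nonneg {x : ℝ} (hx : -1 < x) : 0 ≤ mm x := by
  have h1 : (0:ℝ) < 1 + x := by linarith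
  have := Real.log_le_sub_one_of_pos h1
  simp only [mm]; linarith

lemma mm_pos {x : ℝ} (hx : -1 < x) (hx0 : x ≠ 0) : 0 < mm x := by
  have h1 : (0:ℝ) < 1 + x := by linarith
  have h2 : (1:ℝ) + x ≠ 1 := by intro h; apply hx0; linarith
  have := Real.log_lt_sub_one_of_pos h1 h2
  simp only [mm]; linarith

lemma mm_strictMono : StrictMonoOn mm (Ici (0:ℝ)) := by
  apply strictMonoOn_of_deriv_pos (convex_Ici 0)
    (mm_cont.mono (fun x (hx : x ∈ Ici (0:ℝ)) => by simp at hx ⊢; linarith))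
  intro x hx
  rw [interior_Ici] at hx
  have hx' : (0:ℝ) < x := hx
  rw [(mm_hasDerivAt (by linarith)).deriv]
  have : 1/(1+x) < 1 := by rw [div_lt_one (by linarith)]; linarith
  linarith

lemma mm_strictAnti : StrictAntiOn mm (Ioc (-1:ℝ) 0) := by
  apply strictAntiOn_of_deriv_neg (convex_Ioc (-1:ℝ) 0)
    (mm_cont.mono (fun x hx => by simp at hx ⊢; linarith [hx.1]))
  intro x hx
  rw [interior_Ioc] at hx
  rw [(mm_hasDerivAt hx.1).deriv]
  have h1 : (0:ℝ) < 1 + x := by linarith [hx.1]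
  have : 1 < 1/(1+x) := by rw [lt_div_iff₀ h1]; linarith [hx.2]
  linarith

noncomputable def gt' : ℝ → ℝ := fun x => Real.sign x * Real.sqrt (mm x)

lemma gt'_zero : gt' 0 = 0 := by simp [gt', Real.sign_zero]

lemma gt'_pos {x : ℝ} (hx : 0 < x) : 0 < gt' x := by
  rw [gt', Real.sign_of_pos hx, one_mul]
  exact Real.sqrt_pos.mpr (mm_pos (by linarith) hx.ne')

lemma gt'_neg {x : ℝ} (hx1 : -1 < x) (hx : x < 0) : gt' x < 0 := by
  rw [gt', Real.sign_of_neg hx, neg_one_mul, neg_lt_zero]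
  exact Real.sqrt_pos.mpr (mm_pos hx1 hx.ne)

lemma gt'_inj {a b : ℝ} (ha : -1 < a) (hb : -1 < b) (hab : gt' a = gt' b) : a = b := by
  rcases lt_trichotomy a 0 with h1|h1|h1
  · rcases lt_trichotomy b 0 with h2|h2|h2
    · rw [gt', gt', Real.sign_of_neg h1, Real.sign_of_neg h2,
        neg_one_mul, neg_one_mul, neg_inj] at hab
      have hmm := (Real.sqrt_inj (mm_nonneg ha) (mm_nonneg hb)).mp hab
      exact mm_strictAnti.injOn ⟨ha, h1.le⟩ ⟨hb, h2.le⟩ hmm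
    · exfalso; rw [h2, gt'_zero] at hab; exact (gt'_neg ha h1).ne hab
    · exfalso; linarith [gt'_neg ha h1, gt'_pos h2]
  · rcases lt_trichotomy b 0 with h2|h2|h2
    · exfalso; rw [h1, gt'_zero] at hab; exact (gt'_neg hb h2).ne hab.symm
    · rw [h1, h2]
    · exfalso; rw [h1, gt'_zero] at hab; exact (gt'_pos h2).ne' hab.symm
  · rcases lt_trichotomy b 0 with h2|h2|h2
    · exfalso; linarith [gt'_pos h1, gt'_neg hb h2]
    · exfalso; rw [h2, gt'_zero] at hab; exact (gt'_pos h1).ne' hab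
    · rw [gt', gt', Real.sign_of_pos h1, Real.sign_of_pos h2, one_mul, one_mul] at hab
      have hmm := (Real.sqrt_inj (mm_nonneg ha) (mm_nonneg hb)).mp hab
      exact mm_strictMono.injOn h1.le h2.le hmm

noncomputable def gg : ℝ → ℝ := fun x => x * hh x

lemma gg_zero : gg 0 = 0 := by simp [gg]

lemma gg_contDiffAt : ContDiffAt ℝ 4 gg 0 := contDiffAt_id.mul hh_contDiffAt

lemma G1 : deriv gg =ᶠ[𝓝 (0:ℝ)] fun x => hh x + x * deriv hh x := by
  filter_upwards [ev_cd hh_contDiffAt] with x hx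
  have h := (hasDerivAt_id' (𝕜 := ℝ) x |>.fun_mul (cd_diff0 hx).hasDerivAt).deriv
  unfold gg
  rw [h]; ring

lemma G2 : deriv (deriv gg) =ᶠ[𝓝 (0:ℝ)]
    fun x => 2*deriv hh x + x * deriv (deriv hh) x := by
  filter_upwards [ev_cd hh_contDiffAt, G1.eventuallyEq_nhds] with x hx h1
  rw [h1.deriv_eq]
  have h := ((cd_diff0 hx).hasDerivAt.fun_add
    ((hasDerivAt_id' (𝕜 := ℝ) x).fun_mul (cd_diff1 hx).hasDerivAt)).deriv
  rw [h]; ring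

lemma G3 : deriv (deriv (deriv gg)) =ᶠ[𝓝 (0:ℝ)]
    fun x => 3*deriv (deriv hh) x + x * deriv (deriv (deriv hh)) x := by
  filter_upwards [ev_cd hh_contDiffAt, G2.eventuallyEq_nhds] with x hx h2
  rw [h2.deriv_eq]
  have h := (((cd_diff1 hx).hasDerivAt.const_mul (2:ℝ)).fun_add
    ((hasDerivAt_id' (𝕜 := ℝ) x).fun_mul (cd_diff2 hx).hasDerivAt)).deriv
  rw [h]; ring

lemma G4 : deriv (deriv (deriv (deriv gg))) 0 = 4 * deriv (deriv (deriv hh)) 0 := by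
  have hy := (ev_cd hh_contDiffAt).self_of_nhds
  have h3 := G3.eventuallyEq_nhds.self_of_nhds
  rw [h3.deriv_eq]
  have h := (((cd_diff2 hy).hasDerivAt.const_mul (3:ℝ)).fun_add
    ((hasDerivAt_id' (𝕜 := ℝ) (0:ℝ)).fun_mul (cd_diff3 hy).hasDerivAt)).deriv
  rw [h]; ring

lemma ggd1 : deriv gg 0 = Real.sqrt 2/2 := by
  have := G1.self_of_nhds; simp only [] at this; rw [this, hh0]; ring
lemma ggd2 : deriv (deriv gg) 0 = -(Real.sqrt 2)/3 := by
  have := G2.self_of_nhds; simp only [] at this; rw [this, hh_d1]; ring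
lemma ggd3 : deriv (deriv (deriv gg)) 0 = 7*Real.sqrt 2/12 := by
  have := G3.self_of_nhds; simp only [] at this; rw [this, hh_d2]; ring
lemma ggd4 : deriv (deriv (deriv (deriv gg))) 0 = -(73*Real.sqrt 2)/45 := by
  rw [G4, hh_d3]; ring

variable {y : ℝ → ℝ}

lemma ev_ycd (ycd : ContDiffAt ℝ 4 y 0) : ∀ᶠ x in 𝓝 (0:ℝ), ContDiffAt ℝ 4 y (gg x) := by
  have ht : Tendsto gg (𝓝 0) (𝓝 0) := by
    have := gg_contDiffAt.continuousAt
    rwa [ContinuousAt, gg_zero] at this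
  exact ht.eventually (ev_cd ycd)

lemma B1 (ycd : ContDiffAt ℝ 4 y 0) (hyg : hh =ᶠ[𝓝 (0:ℝ)] fun x => y (gg x)) :
    deriv hh =ᶠ[𝓝 (0:ℝ)] fun x => deriv y (gg x) * deriv gg x := by
  filter_upwards [hyg.eventuallyEq_nhds, ev_ycd ycd, ev_cd gg_contDiffAt] with x hq hyx hgx
  rw [hq.deriv_eq]
  have hA : HasDerivAt (fun z => y (gg z)) (deriv y (gg x) * deriv gg x) x :=
    HasDerivAt.comp x (cd_diff0 hyx).hasDerivAt (cd_diff0 hgx).hasDerivAt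
  exact hA.deriv

lemma B2 (ycd : ContDiffAt ℝ 4 y 0) (hyg : hh =ᶠ[𝓝 (0:ℝ)] fun x => y (gg x)) :
    deriv (deriv hh) =ᶠ[𝓝 (0:ℝ)] fun x =>
      deriv (deriv y) (gg x) * (deriv gg x)^2 + deriv y (gg x) * deriv (deriv gg) x := by
  filter_upwards [(B1 ycd hyg).eventuallyEq_nhds, ev_ycd ycd, ev_cd gg_contDiffAt]
    with x h1 hyx hgx
  rw [h1.deriv_eq]
  have hA : HasDerivAt (fun z => deriv y (gg z)) (deriv (deriv y) (gg x) * deriv gg x) x :=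
    HasDerivAt.comp x (cd_diff1 hyx).hasDerivAt (cd_diff0 hgx).hasDerivAt
  have h := (hA.fun_mul (cd_diff1 hgx).hasDerivAt).deriv
  rw [h]; ring

lemma B3 (ycd : ContDiffAt ℝ 4 y 0) (hyg : hh =ᶠ[𝓝 (0:ℝ)] fun x => y (gg x)) :
    deriv (deriv (deriv hh)) =ᶠ[𝓝 (0:ℝ)] fun x =>
      deriv (deriv (deriv y)) (gg x) * (deriv gg x)^3
      + 3*(deriv (deriv y) (gg x) * (deriv gg x * deriv (deriv gg) x))
      + deriv y (gg x) * deriv (deriv (deriv gg)) x := by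
  filter_upwards [(B2 ycd hyg).eventuallyEq_nhds, ev_ycd ycd, ev_cd gg_contDiffAt]
    with x h2 hyx hgx
  rw [h2.deriv_eq]
  have hA : HasDerivAt (fun z => deriv (deriv y) (gg z))
      (deriv (deriv (deriv y)) (gg x) * deriv gg x) x :=
    HasDerivAt.comp x (cd_diff2 hyx).hasDerivAt (cd_diff0 hgx).hasDerivAt
  have hB : HasDerivAt (fun z => deriv y (gg z)) (deriv (deriv y) (gg x) * deriv gg x) x :=
    HasDerivAt.comp x (cd_diff1 hyx).hasDerivAt (cd_diff0 hgx).hasDerivAt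
  have h := ((hA.fun_mul ((cd_diff1 hgx).hasDerivAt.fun_pow 2)).fun_add
    (hB.fun_mul (cd_diff2 hgx).hasDerivAt)).deriv
  rw [h]; ring

lemma B4 (ycd : ContDiffAt ℝ 4 y 0) (hyg : hh =ᶠ[𝓝 (0:ℝ)] fun x => y (gg x)) :
    deriv (deriv (deriv (deriv hh))) 0 =
      deriv (deriv (deriv (deriv y))) 0 * (deriv gg 0)^4
      + 6*(deriv (deriv (deriv y)) 0 * ((deriv gg 0)^2 * deriv (deriv gg) 0))
      + deriv (deriv y) 0 * (3*(deriv (deriv gg) 0)^2 + 4*(deriv gg 0 * deriv (deriv (deriv gg)) 0))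
      + deriv y 0 * deriv (deriv (deriv (deriv gg))) 0 := by
  have h3 := (B3 ycd hyg).eventuallyEq_nhds.self_of_nhds
  have hyx := (ev_ycd ycd).self_of_nhds
  have hgx := (ev_cd gg_contDiffAt).self_of_nhds
  rw [h3.deriv_eq]
  have hA : HasDerivAt (fun z => deriv (deriv (deriv y)) (gg z))
      (deriv (deriv (deriv (deriv y))) (gg 0) * deriv gg 0) 0 :=
    HasDerivAt.comp 0 (cd_diff3 hyx).hasDerivAt (cd_diff0 hgx).hasDerivAt
  have hB : HasDerivAt (fun z => deriv (deriv y) (gg z))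
      (deriv (deriv (deriv y)) (gg 0) * deriv gg 0) 0 :=
    HasDerivAt.comp 0 (cd_diff2 hyx).hasDerivAt (cd_diff0 hgx).hasDerivAt
  have hC : HasDerivAt (fun z => deriv y (gg z))
      (deriv (deriv y) (gg 0) * deriv gg 0) 0 :=
    HasDerivAt.comp 0 (cd_diff1 hyx).hasDerivAt (cd_diff0 hgx).hasDerivAt
  have h := (((hA.fun_mul ((cd_diff1 hgx).hasDerivAt.fun_pow 3)).fun_add
      ((hB.fun_mul ((cd_diff1 hgx).hasDerivAt.fun_mul (cd_diff2 hgx).hasDerivAt)).const_mul 3)).fun_add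
      (hC.fun_mul (cd_diff3 hgx).hasDerivAt)).deriv
  rw [h, gg_zero]; ring

lemma gt'_eq_gg {x : ℝ} (hx : -1 < x) : gt' x = gg x := by
  rcases eq_or_ne x 0 with rfl|hx0
  · rw [gt'_zero, gg_zero]
  · have hq : qq x = mm x / x^2 := by rw [qq, if_neg hx0]; rfl
    have h1 : mm x = x^2 * qq x := by
      rw [hq]; field_simp
    have h2 : Real.sqrt (mm x) = |x| * hh x := by
      rw [h1, Real.sqrt_mul (sq_nonneg x), Real.sqrt_sq_eq_abs]; rfl
    have h3 : Real.sign x * |x| = x := by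
      rcases lt_trichotomy x 0 with h|h|h
      · rw [Real.sign_of_neg h, abs_of_neg h]; ring
      · exact absurd h hx0
      · rw [Real.sign_of_pos h, abs_of_pos h]; ring
    rw [gt', h2, ← mul_assoc, h3]; rfl

theorem stmt_14 (f : ℝ → ℝ)
    (hf : ∀ u : ℝ, f u ∈ Set.Ioi (-1 : ℝ) ∧
      Real.sign (f u) * Real.sqrt (f u - Real.log (1 + f u)) = u)
    (y : ℝ → ℝ)
    (hy : ∀ v : ℝ, y v = if v = 0 then Real.sqrt 2 / 2 else v / f v)
    (a : ℕ → ℝ)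
    (ha : ∀ k : ℕ, a k = iteratedDeriv k y 0 / (Nat.factorial k)) :
    a 0 = Real.sqrt 2 / 2 ∧ a 1 = -(1/3) ∧ a 2 = Real.sqrt 2 / 12 ∧
    a 3 = -(4/135) ∧ a 4 = Real.sqrt 2 / 432 := by
  have hgt : ∀ v, gt' (f v) = v := fun v => by
    have h := (hf v).2
    simpa [gt', mm] using h
  have hfm : ∀ v, -1 < f v := fun v => (hf v).1
  have f_gg : ∀ x, -1 < x → f (gg x) = x := by
    intro x hx
    apply gt'_inj (hfm _) hx
    rw [hgt (gg x), gt'_eq_gg hx]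
  have f_zero : f 0 = 0 := by
    have h := f_gg 0 (by norm_num); rwa [gg_zero] at h
  have y_eq : ∀ v, y v = hh (f v) := by
    intro v
    rcases eq_or_ne v 0 with rfl|hv
    · rw [hy 0, if_pos rfl, f_zero, hh0]
    · have hfv0 : f v ≠ 0 := by
        intro h0
        apply hv; rw [← hgt v, h0, gt'_zero]
      have hv_eq : v = gg (f v) := by rw [← gt'_eq_gg (hfm v), hgt]
      rw [hy v, if_neg hv, div_eq_iff hfv0]
      conv_lhs => rw [hv_eq]
      show f v * hh (f v) = hh (f v) * f v
      ring
  have hc : hh 0 ≠ 0 := by rw [hh0]; positivity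
  have hgd : HasDerivAt gg (hh 0) 0 := by
    have h := (hasDerivAt_id' (𝕜 := ℝ) (0:ℝ)).mul (cd_diff0 hh_contDiffAt).hasDerivAt
    have h2 : HasDerivAt gg (1 * hh 0 + 0 * deriv hh 0) 0 := h
    simpa using h2
  set e : ℝ ≃L[ℝ] ℝ := ContinuousLinearEquiv.unitsEquivAut ℝ (Units.mk0 (hh 0) hc) with he
  have hfd : HasFDerivAt gg (e : ℝ →L[ℝ] ℝ) 0 := by
    have h1 := hgd.hasFDerivAt
    convert h1 using 1
    · rfl
    · rfl
  have hn : (4 : WithTop ℕ∞) ≠ 0 := by norm_num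
  have hloc : ContDiffAt ℝ 4 (gg_contDiffAt.localInverse hfd hn) (gg 0) :=
    gg_contDiffAt.to_localInverse hfd hn
  have hg0 : ∀ᶠ x in 𝓝 (0:ℝ), f (gg x) = x := by
    filter_upwards [eventually_gt_nhds (show (-1:ℝ) < 0 by norm_num)] with x hx
    exact f_gg x hx
  have huniq := (gg_contDiffAt.hasStrictFDerivAt' hfd hn).localInverse_unique hg0
  rw [gg_zero] at hloc huniq
  have f_cd : ContDiffAt ℝ 4 f 0 := hloc.congr_of_eventuallyEq huniq
  have y_cd : ContDiffAt ℝ 4 y 0 := by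
    have h1 : ContDiffAt ℝ 4 hh (f 0) := by rw [f_zero]; exact hh_contDiffAt
    exact (h1.comp 0 f_cd).congr_of_eventuallyEq
      (by filter_upwards with v; rw [y_eq v]; rfl)
  have hyg : hh =ᶠ[𝓝 (0:ℝ)] fun x => y (gg x) := by
    filter_upwards [eventually_gt_nhds (show (-1:ℝ) < 0 by norm_num)] with x hx
    rw [y_eq, f_gg x hx]
  have b1 := (B1 y_cd hyg).self_of_nhds
  simp only [] at b1
  rw [gg_zero, ggd1, hh_d1] at b1
  have hy1 : deriv y 0 = -(1/3) := by
    apply sqrt2_cancel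
    linear_combination (-2)*b1
  have b2 := (B2 y_cd hyg).self_of_nhds
  simp only [] at b2
  rw [gg_zero, ggd1, ggd2, hh_d2, hy1] at b2
  have hy2 : deriv (deriv y) 0 = Real.sqrt 2/6 := by
    apply sqrt2_cancel
    linear_combination (-2*Real.sqrt 2)*b2 + (-(Real.sqrt 2)/2 * deriv (deriv y) 0)*hs2
  have b3 := (B3 y_cd hyg).self_of_nhds
  simp only [] at b3
  rw [gg_zero, ggd1, ggd2, ggd3, hh_d3, hy1, hy2] at b3
  have hy3 : deriv (deriv (deriv y)) 0 = -(8/45) := by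
    apply sqrt2_cancel
    linear_combination (-4)*b3
      + (Real.sqrt 2/3 - Real.sqrt 2/2*(deriv (deriv (deriv y)) 0))*hs2
  have b4 := B4 y_cd hyg
  rw [ggd1, ggd2, ggd3, ggd4, hh_d4, hy1, hy2, hy3] at b4
  have hy4 : deriv (deriv (deriv (deriv y))) 0 = Real.sqrt 2/18 := by
    apply sqrt2_cancel
    linear_combination (-4*Real.sqrt 2)*b4
      + (-(Real.sqrt 2)/2*(deriv (deriv (deriv (deriv y))) 0)
         - Real.sqrt 2^3/4*(deriv (deriv (deriv (deriv y))) 0) - 61*Real.sqrt 2^2/45)*hs2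
  have hy0 : y 0 = Real.sqrt 2 / 2 := by rw [hy 0, if_pos rfl]
  refine ⟨?_, ?_, ?_, ?_, ?_⟩ <;> rw [ha]
  · simp only [iteratedDeriv_zero, hy0, Nat.factorial]; norm_num
  · simp only [iteratedDeriv_one, hy1, Nat.factorial]; norm_num
  · simp only [iteratedDeriv_succ, iteratedDeriv_zero, hy2, Nat.factorial]; norm_num; ring
  · simp only [iteratedDeriv_succ, iteratedDeriv_zero, hy3, Nat.factorial]; norm_num
  · simp only [iteratedDeriv_succ, iteratedDeriv_zero, hy4, Nat.factorial]; norm_num; ring
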